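/- arXiv:1002.4202 — 2 statements merged into one kernel-verified Lean document; each statement's English description precedes it below -/
import Mathlib

section
/- Let a, b, A be positive real numbers with A ≥ 1, and let n, d ≥ 1 be positive integers such that n² ≤ a(log n + 1)^d + b. Then n ≤ max{ A(2d·log(2d) + 2·log A)^d, a/A + √b }. -/
theorem stmt_0 (a b A : ℝ) (ha : 0 < a) (hb : 0 < b) (hA : 1 ≤ A)
    (n d : ℕ) (hn : 1 ≤ n) (hd : 1 ≤ d)
    (h : (n : ℝ) ^ 2 ≤ a * (Real.log n + 1) ^ d + b) :
    (n : ℝ) ≤ max (A * (2 * d * Real.log (2 * d) + 2 * Real.log A) ^ d)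
      (a / A + Real.sqrt b) := by
  set B : ℝ := 2 * d * Real.log (2 * d) + 2 * Real.log A with hBdef
  rcases le_or_gt (n : ℝ) (A * B ^ d) with hc | hc
  · exact le_max_of_le_left hc
  refine le_max_of_le_right ?_
  have hA0 : (0 : ℝ) < A := lt_of_lt_of_le one_pos hA
  have hlogA : 0 ≤ Real.log A := Real.log_nonneg hA
  have hd1 : (1 : ℝ) ≤ (d : ℝ) := by exact_mod_cast hd
  have hdpos : (0 : ℝ) < (d : ℝ) := by linarith
  have h2d : (2 : ℝ) ≤ 2 * d := by nlinarith
  have hlog2d : Real.log 2 ≤ Real.log (2 * d) := Real.log_le_log (by norm_num) h2d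
  have hlog2 : (0.6931 : ℝ) < Real.log 2 := by linarith [Real.log_two_gt_d9]
  have hB1 : 1 < B := by
    rw [hBdef]; nlinarith
  have hB0 : (0 : ℝ) < B := by linarith
  have hBd : B ≤ B ^ d := le_self_pow₀ hB1.le (by omega)
  have hnA : B ^ d < (n : ℝ) / A := (lt_div_iff₀ hA0).mpr (by linarith [hc, mul_comm A (B ^ d)])
  set y : ℝ := ((n : ℝ) / A) ^ ((d : ℝ)⁻¹) with hydef
  have hnA0 : (0 : ℝ) ≤ (n : ℝ) / A := le_trans (pow_nonneg hB0.le d) hnA.le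
  have hBy : B ≤ y := by
    have hcalc : B = (B ^ d) ^ ((d : ℝ)⁻¹) := by
      rw [← Real.rpow_natCast B d, ← Real.rpow_mul hB0.le,
        mul_inv_cancel₀ (ne_of_gt hdpos), Real.rpow_one]
    rw [hcalc, hydef]
    exact Real.rpow_le_rpow (pow_nonneg hB0.le d) hnA.le (by positivity)
  have hy0 : (0 : ℝ) < y := lt_of_lt_of_le hB0 hBy
  have hyd : y ^ d = (n : ℝ) / A := by
    rw [hydef, ← Real.rpow_natCast (((n : ℝ) / A) ^ ((d : ℝ)⁻¹)) d,
      ← Real.rpow_mul hnA0, inv_mul_cancel₀ (ne_of_gt hdpos), Real.rpow_one]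
  have hlogn : Real.log n = Real.log A + d * Real.log y := by
    have hAyd : (n : ℝ) = A * y ^ d := by rw [hyd]; field_simp
    rw [hAyd, Real.log_mul (ne_of_gt hA0) (by positivity), Real.log_pow]
  have hlogy : Real.log y ≤ Real.log (2 * d) + (y / (2 * d) - 1) := by
    have h1 := Real.log_le_sub_one_of_pos (show (0 : ℝ) < y / (2 * d) by positivity)
    rw [Real.log_div (ne_of_gt hy0) (by positivity)] at h1
    linarith
  have hkey : Real.log n + 1 ≤ y := by
    have hmul : (d : ℝ) * (Real.log (2 * d) + (y / (2 * d) - 1))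
        = d * Real.log (2 * d) + y / 2 - d := by
      field_simp; ring
    have h2 : (d : ℝ) * Real.log y ≤ d * Real.log (2 * d) + y / 2 - d := by
      have := mul_le_mul_of_nonneg_left hlogy hdpos.le
      linarith [this, hmul.le, hmul.ge]
    have hBhalf : Real.log A + d * Real.log (2 * d) = B / 2 := by rw [hBdef]; ring
    linarith [hlogn, hBy]
  have hlogn0 : (0 : ℝ) ≤ Real.log n + 1 := by
    have : (1 : ℝ) ≤ (n : ℝ) := by exact_mod_cast hn
    linarith [Real.log_nonneg this]
  have hfin : A * (Real.log n + 1) ^ d ≤ (n : ℝ) := by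
    have hpow : (Real.log n + 1) ^ d ≤ y ^ d := pow_le_pow_left₀ hlogn0 hkey d
    calc A * (Real.log n + 1) ^ d ≤ A * y ^ d :=
          mul_le_mul_of_nonneg_left hpow hA0.le
      _ = (n : ℝ) := by rw [hyd]; field_simp
  have haA : (0 : ℝ) < a / A := div_pos ha hA0
  have h2 : (n : ℝ) ^ 2 ≤ a / A * n + b := by
    have h3 := mul_le_mul_of_nonneg_left hfin haA.le
    have h4 : a / A * (A * (Real.log n + 1) ^ d) = a * (Real.log n + 1) ^ d := by
      field_simp
    linarith
  by_contra hcon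
  push_neg at hcon
  have hs0 : (0 : ℝ) ≤ Real.sqrt b := Real.sqrt_nonneg b
  have hs2 : Real.sqrt b ^ 2 = b := Real.sq_sqrt hb.le
  nlinarith [mul_pos (show (0:ℝ) < (n:ℝ) - a/A - Real.sqrt b by linarith)
    (show (0:ℝ) < (n:ℝ) - Real.sqrt b by linarith)]
end

section
/- Let E_A : y² = x(x² − A) with A a positive integer (valuations ≤ 3), P ∈ E_A(ℚ) with x(kP) = A_k/B_k² in lowest terms and B_k > 0. Then x(2kP) = (A_k² + A·B_k⁴)² / (4·B_k²·A_k·(A_k² − A·B_k⁴)). Consequently, if B_k > 1 and |A_k| > A², then B_{2kP} is composite; similarly B_{2kP} is composite if B_k > 1 and A·B_k⁴ − A_k² > 4A², or if |A_k| > A³ and A_k² − A·B_k⁴ > 4A². -/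
noncomputable section

/-- A Weierstrass curve over `ℚ` has integer coefficients. -/
def WeierstrassCurve.IsIntegralModel (W : WeierstrassCurve ℚ) : Prop :=
  W.a₁.den = 1 ∧ W.a₂.den = 1 ∧ W.a₃.den = 1 ∧ W.a₄.den = 1 ∧ W.a₆.den = 1

/-- A minimal Weierstrass equation over `ℚ`: it has integer coefficients and its
discriminant has minimal `p`-adic valuation among all integral models. -/
def WeierstrassCurve.IsMinimalModel (W : WeierstrassCurve ℚ) : Prop :=
  W.IsIntegralModel ∧ ∀ C : WeierstrassCurve.VariableChange ℚ,
    (C • W).IsIntegralModel →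
    ∀ p : ℕ, p.Prime → padicValRat p W.Δ ≤ padicValRat p (C • W).Δ

/-- The `x`-coordinate of an affine point (junk value `0` at the point at infinity). -/
def WeierstrassCurve.Affine.Point.xcoord {W : WeierstrassCurve.Affine ℚ} :
    W.Point → ℚ
  | .zero => 0
  | @WeierstrassCurve.Affine.Point.some _ _ _ x _ _ => x

/-- The denominator `B_P` of a point: `x(P) = A_P / B_P ^ 2` in lowest terms. -/
def WeierstrassCurve.Affine.Point.Bden {W : WeierstrassCurve.Affine ℚ} :
    W.Point → ℕ
  | .zero => 0
  | @WeierstrassCurve.Affine.Point.some _ _ _ x _ _ => Nat.sqrt x.den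

/-- An isogeny `σ : E' → E` of elliptic curves over `ℚ`, of degree `deg`, recorded
together with the rational function `num / denom` (with `num = φ_σ` monic of degree
`deg` and `denom = ψ_σ ^ 2` of degree `deg - 1`) describing the induced map on
`x`-coordinates, and a dual isogeny `dual` with `dual ∘ σ = [deg]`. -/
structure WeierstrassCurve.Isogeny (E' E : WeierstrassCurve.Affine ℚ) where
  toFun : E'.Point → E.Point
  map_add : ∀ P Q : E'.Point, toFun (P + Q) = toFun P + toFun Q
  deg : ℕ
  deg_pos : 0 < deg
  num : Polynomial ℚ
  denom : Polynomial ℚ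
  num_monic : num.Monic
  num_natDegree : num.natDegree = deg
  denom_natDegree : denom.natDegree = deg - 1
  denom_ne_zero : denom ≠ 0
  x_spec : ∀ (x y : ℚ) (h : E'.Nonsingular x y), denom.eval x ≠ 0 →
      ∃ (x' y' : ℚ) (h' : E.Nonsingular x' y'),
        toFun (WeierstrassCurve.Affine.Point.some _ _ h) =
          WeierstrassCurve.Affine.Point.some _ _ h' ∧
        x' = num.eval x / denom.eval x
  ker_spec : ∀ (x y : ℚ) (h : E'.Nonsingular x y), denom.eval x = 0 →
      toFun (WeierstrassCurve.Affine.Point.some _ _ h) = 0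
  dual : E.Point → E'.Point
  dual_map_add : ∀ P Q : E.Point, dual (P + Q) = dual P + dual Q
  dual_comp : ∀ P : E'.Point, dual (toFun P) = deg • P

/-- The naive logarithmic height of a rational number. -/
def ratHeight (q : ℚ) : ℝ := Real.log (max (q.num.natAbs) q.den)

/-- The `j`-invariant of a Weierstrass curve. -/
def WeierstrassCurve.jInv (W : WeierstrassCurve ℚ) : ℚ := W.c₄ ^ 3 / W.Δ

/-- The height `h(E) = (1/12) * max (h (j E)) (h (Δ E))` of an elliptic curve. -/
def WeierstrassCurve.height (W : WeierstrassCurve ℚ) : ℝ :=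
  (1 / 12) * max (ratHeight W.jInv) (ratHeight W.Δ)

/-- Reduction of a rational number modulo `p` (junk if `p` divides the denominator). -/
def qred (p : ℕ) (q : ℚ) : ZMod p := (q.num : ZMod p) * (q.den : ZMod p)⁻¹

/-- The reduction modulo `p` of a Weierstrass curve over `ℚ`. -/
def WeierstrassCurve.red (W : WeierstrassCurve ℚ) (p : ℕ) : WeierstrassCurve (ZMod p) :=
  ⟨qred p W.a₁, qred p W.a₂, qred p W.a₃, qred p W.a₄, qred p W.a₆⟩

/-- A point `P` has good reduction at `p` if it reduces either to the point at infinity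
or to a nonsingular point of the reduced curve. -/
def WeierstrassCurve.Affine.Point.GoodRedAt {W : WeierstrassCurve.Affine ℚ}
    (P : W.Point) (p : ℕ) : Prop :=
  match P with
  | .zero => True
  | @WeierstrassCurve.Affine.Point.some _ _ _ x y _ =>
      p ∣ x.den ∨ (W.red p).toAffine.Nonsingular (qred p x) (qred p y)

end



private lemma den_dvd_aux (N D : ℤ) (hD : D ≠ 0) (q : ℚ) (hq : q = (N : ℚ) / (D : ℚ))
    (M G : ℕ) (hMG : M * G = D.natAbs) (hG : Int.gcd N D ∣ G) : M ∣ q.den := by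
  have hden0 : q.den ≠ 0 := q.den_nz
  have hDQ : (D : ℚ) ≠ 0 := Int.cast_ne_zero.mpr hD
  have hcross : q.num * D = N * (q.den : ℤ) := by
    have h1 : (q.num : ℚ) / (q.den : ℚ) = (N : ℚ) / (D : ℚ) := by
      rw [Rat.num_div_den q]; exact hq
    rw [div_eq_div_iff (by exact_mod_cast hden0) hDQ] at h1
    exact_mod_cast h1
  have habs : q.num.natAbs * D.natAbs = N.natAbs * q.den := by
    have := congrArg Int.natAbs hcross
    simpa [Int.natAbs_mul] using this
  have hdendvd : q.den ∣ D.natAbs := by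
    have h2 : q.den ∣ q.num.natAbs * D.natAbs := by
      rw [habs]; exact Dvd.intro_left _ rfl
    exact (Nat.Coprime.dvd_of_dvd_mul_left (q.reduced.symm) h2)
  obtain ⟨e, he⟩ := hdendvd
  have he' : N.natAbs = q.num.natAbs * e := by
    have h3 : q.num.natAbs * (q.den * e) = N.natAbs * q.den := by rw [← he]; exact habs
    have h4 : (q.num.natAbs * e) * q.den = N.natAbs * q.den := by ring_nf; ring_nf at h3; linarith
    exact (Nat.eq_of_mul_eq_mul_right (Nat.pos_of_ne_zero hden0) h4).symm
  have hE : e ∣ Int.gcd N D := Nat.dvd_gcd ⟨q.num.natAbs, by rw [he']; ring⟩ ⟨q.den, by rw [he]; ring⟩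
  obtain ⟨f, hf⟩ := hE.trans hG
  have he0 : e ≠ 0 := by
    rintro rfl
    rw [mul_zero] at he
    exact hD (Int.natAbs_eq_zero.mp he)
  refine ⟨f, ?_⟩
  have : q.den * e = (M * f) * e := by
    have : M * (e * f) = q.den * e := by rw [← hf, hMG, he]
    linarith [this]
  exact Nat.eq_of_mul_eq_mul_right (Nat.pos_of_ne_zero he0) this


private lemma caseA_aux {Bk B2 t : ℕ} (hBk : 1 < Bk) (ht : 2 ≤ t) (hB2 : B2 ≠ 0)
    (hdvd : Bk ^ 2 * t ∣ B2 ^ 2) : 1 < B2 ∧ ¬ B2.Prime := by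
  have hBkdvd : Bk ∣ B2 := by
    have : Bk ^ 2 ∣ B2 ^ 2 := (dvd_mul_right _ t).trans hdvd
    exact (Nat.pow_dvd_pow_iff two_ne_zero).mp this
  have hlt : Bk < B2 := by
    have hle : Bk ^ 2 * t ≤ B2 ^ 2 := Nat.le_of_dvd (Nat.pos_of_ne_zero (pow_ne_zero 2 hB2)) hdvd
    have hpos : 0 < Bk ^ 2 := by positivity
    have h2 : Bk ^ 2 < B2 ^ 2 := by nlinarith
    by_contra hcon
    push_neg at hcon
    exact absurd (Nat.pow_le_pow_left hcon 2) (not_le.mpr h2)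
  refine ⟨lt_trans hBk hlt, fun hp => ?_⟩
  rcases hp.eq_one_or_self_of_dvd Bk hBkdvd with h | h
  · omega
  · omega

private lemma caseB_aux {A B2 u' w' : ℕ} (hA : 0 < A) (hu' : A < u') (hw' : 1 < w')
    (hB2 : B2 ≠ 0) (hdvd : u' * w' ∣ B2 ^ 2)
    (hpA : ∀ p : ℕ, p.Prime → p ∣ u' → p ∣ w' → p ∣ A) : 1 < B2 ∧ ¬ B2.Prime := by
  have huw : 4 ≤ u' * w' := by nlinarith
  have h1 : 1 < B2 := by
    by_contra hcon
    interval_cases B2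
    · exact hB2 rfl
    · have h := hdvd
      simp at h
      omega
  refine ⟨h1, fun hp => ?_⟩
  -- B2 = p prime, u'*w' ∣ p^2
  have hpu : B2 ∣ u' := by
    obtain ⟨q, hq, hqd⟩ := Nat.exists_prime_and_dvd (by omega : u' ≠ 1)
    have : q ∣ B2 ^ 2 := (hqd.trans (dvd_mul_right _ _)).trans hdvd
    have : q = B2 := (Nat.prime_dvd_prime_iff_eq hq hp).mp (hq.dvd_of_dvd_pow this)
    exact this ▸ hqd
  have hpw : B2 ∣ w' := by
    obtain ⟨q, hq, hqd⟩ := Nat.exists_prime_and_dvd (by omega : w' ≠ 1)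
    have : q ∣ B2 ^ 2 := (hqd.trans (dvd_mul_left _ _)).trans hdvd
    have : q = B2 := (Nat.prime_dvd_prime_iff_eq hq hp).mp (hq.dvd_of_dvd_pow this)
    exact this ▸ hqd
  have hsq : B2 * B2 ∣ u' * w' := mul_dvd_mul hpu hpw
  have heq : u' * w' = B2 ^ 2 := Nat.dvd_antisymm hdvd (by rw [pow_two]; exact hsq)
  obtain ⟨a, ha⟩ := id hpu
  obtain ⟨b, hb⟩ := id hpw
  have hab : a * b = 1 := by
    have h6 : u' * w' = B2 ^ 2 * (a * b) := by rw [ha, hb]; ring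
    have h5 : B2 ^ 2 * (a * b) = B2 ^ 2 * 1 := by rw [mul_one, ← h6, heq]
    exact Nat.eq_of_mul_eq_mul_left (by positivity) h5
  have ha1 : a = 1 := Nat.eq_one_of_mul_eq_one_right hab
  have hu'B2 : u' = B2 := by rw [ha, ha1, mul_one]
  have hdA : B2 ∣ A := hpA B2 hp hpu hpw
  have : B2 ≤ A := Nat.le_of_dvd hA hdA
  omega

/-- Duplication on `E_A : y² = x (x² - A)`: if `x(kP) = A_k / B_k²` in lowest terms then
`x(2kP) = (A_k² + A B_k⁴)² / (4 B_k² A_k (A_k² - A B_k⁴))`, and `B_{2kP}` is composite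
in each of the three listed situations. -/
theorem stmt_18 (A : ℕ) (hA : 0 < A)
    (hval : ∀ p : ℕ, p.Prime → padicValNat p A ≤ 3)
    (W : WeierstrassCurve.Affine ℚ) (hW : W = ⟨0, 0, 0, -(A : ℚ), 0⟩)
    (P : W.Point) (k : ℕ) (hk : 0 < k)
    (x y : ℚ) (h : W.Nonsingular x y)
    (hkP : k • P = WeierstrassCurve.Affine.Point.some _ _ h)
    (Ak : ℤ) (Bk : ℕ) (hBk : 0 < Bk) (hnum : x.num = Ak) (hden : x.den = Bk ^ 2)
    (x2 y2 : ℚ) (h2 : W.Nonsingular x2 y2)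
    (h2kP : (2 * k) • P = WeierstrassCurve.Affine.Point.some _ _ h2)
    (A2 : ℤ) (B2 : ℕ) (hnum2 : x2.num = A2) (hden2 : x2.den = B2 ^ 2) :
    x2 = ((Ak : ℚ) ^ 2 + (A : ℚ) * (Bk : ℚ) ^ 4) ^ 2 /
        (4 * (Bk : ℚ) ^ 2 * (Ak : ℚ) * ((Ak : ℚ) ^ 2 - (A : ℚ) * (Bk : ℚ) ^ 4)) ∧
    (1 < Bk → (A : ℤ) ^ 2 < |Ak| → 1 < B2 ∧ ¬ B2.Prime) ∧
    (1 < Bk → 4 * (A : ℤ) ^ 2 < (A : ℤ) * (Bk : ℤ) ^ 4 - Ak ^ 2 → 1 < B2 ∧ ¬ B2.Prime) ∧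
    ((A : ℤ) ^ 3 < |Ak| → 4 * (A : ℤ) ^ 2 < Ak ^ 2 - (A : ℤ) * (Bk : ℤ) ^ 4 →
      1 < B2 ∧ ¬ B2.Prime) := by
  -- ## Part 0: curve facts
  have ha1 : W.a₁ = 0 := by rw [hW]
  have ha2 : W.a₂ = 0 := by rw [hW]
  have ha3 : W.a₃ = 0 := by rw [hW]
  have ha4 : W.a₄ = -(A:ℚ) := by rw [hW]
  have ha6 : W.a₆ = 0 := by rw [hW]
  have hnegY : W.negY x y = -y := by
    simp [WeierstrassCurve.Affine.negY, ha1, ha3]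
  have heq : y ^ 2 = x ^ 3 - (A:ℚ) * x := by
    have h1 := h.1
    rw [WeierstrassCurve.Affine.equation_iff, ha1, ha2, ha3, ha4, ha6] at h1
    linarith
  have h2sum : (2 * k) • P =
      WeierstrassCurve.Affine.Point.some _ _ h + WeierstrassCurve.Affine.Point.some _ _ h := by
    rw [two_mul, add_nsmul, hkP]
  have hy0 : y ≠ 0 := by
    intro h0
    have hyeq : y = W.negY x y := by rw [hnegY, h0, neg_zero]
    have hzero := WeierstrassCurve.Affine.Point.add_self_of_Y_eq (h₁ := h) hyeq
    rw [h2kP, hzero] at h2sum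
    exact WeierstrassCurve.Affine.Point.some_ne_zero h2 h2sum
  have hyne : y ≠ W.negY x y := by
    rw [hnegY]
    intro hcon
    exact hy0 (by linarith)
  have hadd := WeierstrassCurve.Affine.Point.add_self_of_Y_ne (h₁ := h) hyne
  rw [h2kP, hadd] at h2sum
  have hx2 : x2 = W.addX x x (W.slope x x y y) := by injection h2sum
  rw [WeierstrassCurve.Affine.slope_of_Y_ne rfl hyne] at hx2
  rw [WeierstrassCurve.Affine.addX, hnegY, ha1, ha2, ha4] at hx2
  have hx0 : x ≠ 0 := by
    intro h0
    apply hy0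
    have : y ^ 2 = 0 := by rw [heq, h0]; ring
    exact pow_eq_zero_iff two_ne_zero |>.mp this
  have hxA : x ^ 2 - (A:ℚ) ≠ 0 := by
    intro h0
    apply hy0
    have : y ^ 2 = 0 := by rw [heq]; linear_combination x * h0
    exact pow_eq_zero_iff two_ne_zero |>.mp this
  have hdenne : 4 * x * (x ^ 2 - (A:ℚ)) ≠ 0 := by
    intro h0
    rcases mul_eq_zero.mp h0 with h' | h'
    · rcases mul_eq_zero.mp h' with h'' | h''
      · norm_num at h''
      · exact hx0 h''
    · exact hxA h'
  have hx2form : x2 = (x ^ 2 + (A:ℚ)) ^ 2 / (4 * x * (x ^ 2 - (A:ℚ))) := by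
    rw [eq_div_iff hdenne]
    field_simp [hy0] at hx2
    ring_nf at hx2
    rw [heq] at hx2
    linear_combination hx2
  -- ## Part 1: the duplication formula in terms of Ak, Bk
  have hBk0 : (Bk:ℚ) ≠ 0 := Nat.cast_ne_zero.mpr hBk.ne'
  have hxq : x = (Ak:ℚ) / (Bk:ℚ) ^ 2 := by
    rw [← Rat.num_div_den x, hnum, hden]; push_cast; ring
  have hAkq : (Ak:ℚ) = x * (Bk:ℚ) ^ 2 := by rw [hxq]; field_simp
  have goal1 : x2 = ((Ak : ℚ) ^ 2 + (A : ℚ) * (Bk : ℚ) ^ 4) ^ 2 /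
      (4 * (Bk : ℚ) ^ 2 * (Ak : ℚ) * ((Ak : ℚ) ^ 2 - (A : ℚ) * (Bk : ℚ) ^ 4)) := by
    rw [hx2form, hAkq]
    have hd2 : 4 * (Bk:ℚ) ^ 2 * (x * (Bk:ℚ) ^ 2) *
        ((x * (Bk:ℚ) ^ 2) ^ 2 - (A:ℚ) * (Bk:ℚ) ^ 4) ≠ 0 := by
      have hfac : 4 * (Bk:ℚ) ^ 2 * (x * (Bk:ℚ) ^ 2) *
          ((x * (Bk:ℚ) ^ 2) ^ 2 - (A:ℚ) * (Bk:ℚ) ^ 4)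
          = (Bk:ℚ) ^ 8 * (4 * x * (x ^ 2 - (A:ℚ))) := by ring
      rw [hfac]
      exact mul_ne_zero (pow_ne_zero _ hBk0) hdenne
    rw [div_eq_div_iff hdenne hd2]
    ring
  clear hadd h2sum hx2 hx2form hdenne hyne hy0 hnegY heq ha1 ha2 ha3 ha4 ha6
  clear hkP h2kP hk hval hnum2 h h2 P hW W
  clear y y2 k A2
  -- ## Part 2: number theory setup
  set s : ℤ := Ak ^ 2 + (A:ℤ) * (Bk:ℤ) ^ 4 with hs
  set v : ℤ := Ak ^ 2 - (A:ℤ) * (Bk:ℤ) ^ 4 with hv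
  set u : ℕ := Ak.natAbs with hu
  set w : ℕ := v.natAbs with hw
  have hAk0 : Ak ≠ 0 := by
    intro h0
    apply hx0
    rw [hxq, h0]
    simp
  have hv0 : v ≠ 0 := by
    intro h0
    apply hxA
    have hq0 : ((Ak:ℚ) ^ 2 - (A:ℚ) * (Bk:ℚ) ^ 4) = 0 := by
      have hvq : ((v : ℤ) : ℚ) = 0 := by rw [h0]; simp
      rw [hv] at hvq
      push_cast at hvq
      linarith
    have hxv : x ^ 2 - (A:ℚ) = ((Ak:ℚ) ^ 2 - (A:ℚ) * (Bk:ℚ) ^ 4) / (Bk:ℚ) ^ 4 := by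
      rw [hxq]
      field_simp
    rw [hxv, hq0, zero_div]
  have hu0 : u ≠ 0 := Int.natAbs_ne_zero.mpr hAk0
  have hw0 : w ≠ 0 := Int.natAbs_ne_zero.mpr hv0
  have hB2ne : B2 ≠ 0 := by
    intro h0
    apply x2.den_nz
    rw [hden2, h0]
    simp
  have copAB : Nat.Coprime u Bk := by
    have hred := x.reduced
    rw [hnum, hden] at hred
    exact Nat.Coprime.coprime_dvd_right (dvd_pow_self Bk two_ne_zero) hred
  -- coprimality of s with Bk
  have cops : Nat.Coprime s.natAbs Bk := by
    rw [Nat.coprime_comm]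
    by_contra hcon
    obtain ⟨p, hp, hpB, hps⟩ := Nat.Prime.not_coprime_iff_dvd.mp hcon
    have h1 : (p:ℤ) ∣ s := (Int.natCast_dvd_natCast.mpr hps).trans (Int.natAbs_dvd.mpr dvd_rfl)
    have h2 : (p:ℤ) ∣ (A:ℤ) * (Bk:ℤ) ^ 4 :=
      Dvd.dvd.mul_left (dvd_pow (Int.natCast_dvd_natCast.mpr hpB) (by norm_num)) _
    have h3 : (p:ℤ) ∣ Ak ^ 2 := by
      have hAk2 : Ak ^ 2 = s - (A:ℤ) * (Bk:ℤ) ^ 4 := by rw [hs]; ring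
      rw [hAk2]
      exact dvd_sub h1 h2
    have h4 : (p:ℤ) ∣ Ak := (Int.prime_iff_natAbs_prime.mpr (by simpa using hp)).dvd_of_dvd_pow h3
    have h5 : p ∣ u := Int.natCast_dvd_natCast.mp (Int.dvd_natAbs.mpr h4)
    have h6 := Nat.dvd_gcd h5 hpB
    rw [copAB.gcd_eq_one] at h6
    exact hp.ne_one (Nat.dvd_one.mp h6)
  set n : ℕ := s.natAbs ^ 2 with hn
  set gu : ℕ := Nat.gcd n u with hgu
  set gw : ℕ := Nat.gcd n w with hgw
  -- gu divides A^2
  have hguA : gu ∣ A ^ 2 := by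
    have hds : Nat.gcd s.natAbs u ∣ A := by
      set d := Nat.gcd s.natAbs u with hd
      have hd_s : (d:ℤ) ∣ s :=
        (Int.natCast_dvd_natCast.mpr (Nat.gcd_dvd_left _ _)).trans (Int.natAbs_dvd.mpr dvd_rfl)
      have hd_Ak : (d:ℤ) ∣ Ak :=
        Int.dvd_natAbs.mp (Int.natCast_dvd_natCast.mpr (Nat.gcd_dvd_right _ _))
      have hd_AB : (d:ℤ) ∣ (A:ℤ) * (Bk:ℤ) ^ 4 := by
        have hABs : (A:ℤ) * (Bk:ℤ) ^ 4 = s - Ak * Ak := by rw [hs]; ring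
        rw [hABs]
        exact dvd_sub hd_s (hd_Ak.mul_left Ak)
      have hd_nat : d ∣ A * Bk ^ 4 := by
        have hcast : (d:ℤ) ∣ ((A * Bk ^ 4 : ℕ) : ℤ) := by push_cast; exact hd_AB
        exact_mod_cast hcast
      have hcop : Nat.Coprime d (Bk ^ 4) :=
        ((copAB.coprime_dvd_left (Nat.gcd_dvd_right _ _)).pow_right 4)
      exact hcop.dvd_of_dvd_mul_right hd_nat
    calc gu ∣ Nat.gcd s.natAbs u ^ 2 := gcd_pow_left_dvd_pow_gcd
      _ ∣ A ^ 2 := pow_dvd_pow_of_dvd hds 2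
  -- gw divides (2A)^2
  have hgwA : gw ∣ (2 * A) ^ 2 := by
    have hdw : Nat.gcd s.natAbs w ∣ 2 * A := by
      set d := Nat.gcd s.natAbs w with hd
      have hd_s : (d:ℤ) ∣ s :=
        (Int.natCast_dvd_natCast.mpr (Nat.gcd_dvd_left _ _)).trans (Int.natAbs_dvd.mpr dvd_rfl)
      have hd_v : (d:ℤ) ∣ v :=
        Int.dvd_natAbs.mp (Int.natCast_dvd_natCast.mpr (Nat.gcd_dvd_right _ _))
      have hd1 : (d:ℤ) ∣ 2 * Ak ^ 2 := by
        have hsum : 2 * Ak ^ 2 = s + v := by rw [hs, hv]; ring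
        rw [hsum]
        exact dvd_add hd_s hd_v
      have hd2 : (d:ℤ) ∣ 2 * (A:ℤ) * (Bk:ℤ) ^ 4 := by
        have hdiff : 2 * (A:ℤ) * (Bk:ℤ) ^ 4 = s - v := by rw [hs, hv]; ring
        rw [hdiff]
        exact dvd_sub hd_s hd_v
      have hdu2 : d ∣ 2 * u ^ 2 := by
        have habs : ((2 * u ^ 2 : ℕ) : ℤ) = 2 * Ak ^ 2 := by
          push_cast [hu, Int.natCast_natAbs]
          rw [sq_abs]
        have hcast : (d:ℤ) ∣ ((2 * u ^ 2 : ℕ) : ℤ) := by rw [habs]; exact hd1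
        exact_mod_cast hcast
      have hdAB : d ∣ 2 * (A * Bk ^ 4) := by
        have hcast : (d:ℤ) ∣ ((2 * (A * Bk ^ 4) : ℕ) : ℤ) := by
          push_cast
          rw [← mul_assoc]
          exact hd2
        exact_mod_cast hcast
      have hdg : d ∣ Nat.gcd (2 * u ^ 2) (2 * (A * Bk ^ 4)) := Nat.dvd_gcd hdu2 hdAB
      rw [Nat.gcd_mul_left] at hdg
      have hg' : Nat.gcd (u ^ 2) (A * Bk ^ 4) ∣ A := by
        have hcop : Nat.Coprime (Nat.gcd (u ^ 2) (A * Bk ^ 4)) (Bk ^ 4) :=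
          ((copAB.pow 2 4).coprime_dvd_left (Nat.gcd_dvd_left _ _))
        exact hcop.dvd_of_dvd_mul_right (Nat.gcd_dvd_right _ _)
      exact hdg.trans (mul_dvd_mul_left 2 hg')
    calc gw ∣ Nat.gcd s.natAbs w ^ 2 := gcd_pow_left_dvd_pow_gcd
      _ ∣ (2 * A) ^ 2 := pow_dvd_pow_of_dvd hdw 2
  -- the integers N and D
  set N : ℤ := s ^ 2 with hN
  set D : ℤ := 4 * (Bk:ℤ) ^ 2 * Ak * v with hD
  have hDne : D ≠ 0 := by
    rw [hD]
    refine mul_ne_zero (mul_ne_zero (mul_ne_zero (by norm_num) ?_) hAk0) hv0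
    exact pow_ne_zero _ (by exact_mod_cast Nat.cast_ne_zero.mpr hBk.ne')
  have hqND : x2 = (N : ℚ) / (D : ℚ) := by
    rw [goal1, hN, hD, hs, hv]
    push_cast
    ring
  have hDnat : D.natAbs = 4 * Bk ^ 2 * (u * w) := by
    rw [hD, Int.natAbs_mul, Int.natAbs_mul, Int.natAbs_mul]
    simp [Int.natAbs_pow]
    ring
  have hNnat : N.natAbs = n := by rw [hN, hn, Int.natAbs_pow]
  set u' : ℕ := u / gu with hu'
  set w' : ℕ := w / gw with hw'
  have hu'mul : u' * gu = u := Nat.div_mul_cancel (Nat.gcd_dvd_right n u)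
  have hw'mul : w' * gw = w := Nat.div_mul_cancel (Nat.gcd_dvd_right n w)
  set M : ℕ := Bk ^ 2 * u' * w' with hM
  have hMG : M * (4 * (gu * gw)) = D.natAbs := by
    calc M * (4 * (gu * gw)) = 4 * Bk ^ 2 * ((u' * gu) * (w' * gw)) := by rw [hM]; ring
      _ = 4 * Bk ^ 2 * (u * w) := by rw [hu'mul, hw'mul]
      _ = D.natAbs := hDnat.symm
  have hgcdND : Int.gcd N D ∣ 4 * (gu * gw) := by
    have h1 : Int.gcd N D = Nat.gcd n (4 * Bk ^ 2 * (u * w)) := by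
      rw [Int.gcd, hNnat, hDnat]
    rw [h1]
    have h2 : Nat.gcd n (4 * Bk ^ 2 * (u * w)) ∣
        Nat.gcd n (4 * Bk ^ 2) * Nat.gcd n (u * w) := gcd_mul_dvd_mul_gcd n _ _
    have h3 : Nat.gcd n (4 * Bk ^ 2) ∣ 4 := by
      have h4 : Nat.gcd n (4 * Bk ^ 2) ∣ Nat.gcd n 4 * Nat.gcd n (Bk ^ 2) :=
        gcd_mul_dvd_mul_gcd n _ _
      have h5 : Nat.gcd n (Bk ^ 2) = 1 := cops.pow 2 2
      rw [h5, mul_one] at h4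
      exact h4.trans (Nat.gcd_dvd_right n 4)
    have h6 : Nat.gcd n (u * w) ∣ gu * gw := gcd_mul_dvd_mul_gcd n u w
    exact h2.trans (mul_dvd_mul h3 h6)
  have hMden : M ∣ B2 ^ 2 := by
    rw [← hden2]
    exact den_dvd_aux N D hDne x2 hqND M _ hMG hgcdND
  have hu'0 : u' ≠ 0 := by
    intro h0
    rw [h0, zero_mul] at hu'mul
    exact hu0 hu'mul.symm
  have hw'0 : w' ≠ 0 := by
    intro h0
    rw [h0, zero_mul] at hw'mul
    exact hw0 hw'mul.symm
  have hguA2 : gu ≤ A ^ 2 := Nat.le_of_dvd (by positivity) hguA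
  have hgwA2 : gw ≤ (2 * A) ^ 2 := Nat.le_of_dvd (by positivity) hgwA
  -- the prime fact for case 3
  have hpAfact : ∀ p : ℕ, p.Prime → p ∣ u' → p ∣ w' → p ∣ A := by
    intro p hp hpu' hpw'
    have hpu : p ∣ u := hpu'.trans ⟨gu, hu'mul.symm⟩
    have hpw : p ∣ w := hpw'.trans ⟨gw, hw'mul.symm⟩
    have hpAk : (p:ℤ) ∣ Ak := Int.dvd_natAbs.mp (Int.natCast_dvd_natCast.mpr hpu)
    have hpv : (p:ℤ) ∣ v := Int.dvd_natAbs.mp (Int.natCast_dvd_natCast.mpr hpw)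
    have hpAB : (p:ℤ) ∣ (A:ℤ) * (Bk:ℤ) ^ 4 := by
      have hform : (A:ℤ) * (Bk:ℤ) ^ 4 = Ak * Ak - v := by rw [hv]; ring
      rw [hform]
      exact dvd_sub (hpAk.mul_left Ak) hpv
    have hpABnat : p ∣ A * Bk ^ 4 := by
      have hcast : (p:ℤ) ∣ ((A * Bk ^ 4 : ℕ) : ℤ) := by push_cast; exact hpAB
      exact_mod_cast hcast
    rcases (Nat.Prime.dvd_mul hp).mp hpABnat with hdA | hdB
    · exact hdA
    · exfalso
      have hpBk : p ∣ Bk := hp.dvd_of_dvd_pow hdB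
      have h6 := Nat.dvd_gcd hpu hpBk
      rw [copAB.gcd_eq_one] at h6
      exact hp.ne_one (Nat.dvd_one.mp h6)
  refine ⟨goal1, ?_, ?_, ?_⟩
  · -- Case 1
    intro hBk1 hcase
    have hAu : A ^ 2 < u := by
      have hcast : ((A ^ 2 : ℕ) : ℤ) < (u : ℤ) := by
        push_cast
        rwa [Int.abs_eq_natAbs] at hcase
      exact_mod_cast hcast
    have hu'2 : 2 ≤ u' := by
      rcases Nat.lt_or_ge u' 2 with hlt | hge
      · interval_cases u'
        · exact absurd rfl hu'0
        · rw [one_mul] at hu'mul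
          omega
      · exact hge
    have hdvd : Bk ^ 2 * u' ∣ B2 ^ 2 := dvd_trans ⟨w', by rw [hM]⟩ hMden
    exact caseA_aux hBk1 hu'2 hB2ne hdvd
  · -- Case 2
    intro hBk1 hcase
    have hAw : 4 * A ^ 2 < w := by
      have hvneg : (0:ℤ) ≤ -v := by rw [hv]; linarith [hcase, sq_nonneg (A:ℤ)]
      have hwv : (w : ℤ) = -v := by
        rw [hw, ← Int.natAbs_neg, Int.natAbs_of_nonneg hvneg]
      have hcast : ((4 * A ^ 2 : ℕ) : ℤ) < (w : ℤ) := by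
        rw [hwv, hv]
        push_cast
        linarith
      exact_mod_cast hcast
    have hw'2 : 2 ≤ w' := by
      rcases Nat.lt_or_ge w' 2 with hlt | hge
      · interval_cases w'
        · exact absurd rfl hw'0
        · rw [one_mul] at hw'mul
          have h4A : (2 * A) ^ 2 = 4 * A ^ 2 := by ring
          omega
      · exact hge
    have hdvd : Bk ^ 2 * w' ∣ B2 ^ 2 := dvd_trans ⟨u', by rw [hM]; ring⟩ hMden
    exact caseA_aux hBk1 hw'2 hB2ne hdvd
  · -- Case 3
    intro hcase1 hcase2
    have hAu : A ^ 3 < u := by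
      have hcast : ((A ^ 3 : ℕ) : ℤ) < (u : ℤ) := by
        push_cast
        rwa [Int.abs_eq_natAbs] at hcase1
      exact_mod_cast hcast
    have hAw : 4 * A ^ 2 < w := by
      have hvpos : (0:ℤ) ≤ v := by rw [hv]; linarith [hcase2, sq_nonneg (A:ℤ)]
      have hwv : (w : ℤ) = v := by rw [hw, Int.natAbs_of_nonneg hvpos]
      have hcast : ((4 * A ^ 2 : ℕ) : ℤ) < (w : ℤ) := by
        rw [hwv, hv]
        push_cast
        linarith
      exact_mod_cast hcast
    have hu'A : A < u' := by
      rcases Nat.lt_or_ge A u' with hlt | hge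
      · exact hlt
      · exfalso
        have hmul : u' * gu ≤ A * A ^ 2 := Nat.mul_le_mul hge hguA2
        rw [hu'mul] at hmul
        have hA3 : A * A ^ 2 = A ^ 3 := by ring
        omega
    have hw'2 : 1 < w' := by
      rcases Nat.lt_or_ge 1 w' with hlt | hge
      · exact hlt
      · exfalso
        interval_cases w'
        · exact hw'0 rfl
        · rw [one_mul] at hw'mul
          have h4A : (2 * A) ^ 2 = 4 * A ^ 2 := by ring
          omega
    have hdvd : u' * w' ∣ B2 ^ 2 := dvd_trans ⟨Bk ^ 2, by rw [hM]; ring⟩ hMden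
    exact caseB_aux hA hu'A hw'2 hB2ne hdvd hpAfact
end
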